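/- arXiv:1509.03380 — 2 statements merged into one kernel-verified Lean document; each statement's English description precedes it below -/
import Mathlib

section
/- The homomorphism γ: Pic(G)×Pic(H)→Pic(Δ) induced by β is injective, for every choice of triangulated product Δ of G and H. -/
open scoped Classical
open Finset

section TriangulatedProduct

variable {VG VH : Type*}

/-- The column of the Laplacian matrix of `G` indexed by the vertex `w`:
its entry at `v` is `-deg v` if `v = w`, `1` if `v` is adjacent to `w`, and `0` otherwise. -/
noncomputable def lapCol (G : SimpleGraph VG) [Fintype VG] (w v : VG) : ℤ :=
  if v = w then -(((Finset.univ.filter (fun u => G.Adj v u)).card : ℤ))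
  else if G.Adj v w then 1 else 0

/-- A divisor on a finite graph is principal if it lies in the ℤ-span of the
columns of the Laplacian matrix of the graph. -/
def GraphPrincipal (G : SimpleGraph VG) [Fintype VG] (D : VG → ℤ) : Prop :=
  ∃ f : VG → ℤ, ∀ v, D v = ∑ w, f w * lapCol G w v

/-- A triangulated product of the graphs `G` and `H`: for each square
(an edge `aa'` of `G` together with an edge `bb'` of `H`) exactly one of the two
possible diagonals `{(a,b),(a',b')}`, `{(a,b'),(a',b)}` is chosen.  The structure
records the resulting symmetric "diagonal edge" relation. -/
structure TriProd (G : SimpleGraph VG) (H : SimpleGraph VH) where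
  diag : VG × VH → VG × VH → Prop
  diag_symm : ∀ u v, diag u v → diag v u
  diag_adj : ∀ a a' b b', diag (a, b) (a', b') → G.Adj a a' ∧ H.Adj b b'
  diag_choice : ∀ a a' b b', G.Adj a a' → H.Adj b b' →
    (diag (a, b) (a', b') ∧ ¬ diag (a, b') (a', b)) ∨
    (¬ diag (a, b) (a', b') ∧ diag (a, b') (a', b))

namespace TriProd

variable {G : SimpleGraph VG} {H : SimpleGraph VH}

/-- `u` and `v` form an edge of the triangulated product: a horizontal edge,
a vertical edge, or a diagonal edge. -/
def Adj (T : TriProd G H) (u v : VG × VH) : Prop :=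
  (u.2 = v.2 ∧ G.Adj u.1 v.1) ∨ (u.1 = v.1 ∧ H.Adj u.2 v.2) ∨ T.diag u v

/-- `{u, v, w}` is a triangle (2-face) of the triangulated product. -/
def IsFace (T : TriProd G H) (u v w : VG × VH) : Prop :=
  ∃ a a' b b', T.diag (a, b) (a', b') ∧
    ({u, v, w} : Finset (VG × VH)) = {(a, b), (a', b'), (a', b)}

/-- `{u, v, w}` is a triangle of the triangulated product whose diagonal edge
does not contain the vertex `x`. -/
def IsFaceAvoiding (T : TriProd G H) (u v w x : VG × VH) : Prop :=
  ∃ a a' b b', T.diag (a, b) (a', b') ∧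
    ({u, v, w} : Finset (VG × VH)) = {(a, b), (a', b'), (a', b)} ∧
    x ≠ (a, b) ∧ x ≠ (a', b')

variable [Fintype VG] [Fintype VH]

/-- The structure constant `α(e, x)` for the edge `e = {u, v}` of the
triangulated product and the vertex `x`. -/
noncomputable def alpha (T : TriProd G H) (u v x : VG × VH) : ℤ :=
  if x = u ∨ x = v then
    (if T.diag u v then 1
     else ((Finset.univ.filter (fun w => T.IsFaceAvoiding u v w x)).card : ℤ))
  else 0

/-- The divisor of the function `φ`, evaluated at the edge `{u, v}` of the
triangulated product: the sum of `φ` over the third vertices of the triangles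
containing `{u, v}`, minus `α({u,v},u) φ(u) + α({u,v},v) φ(v)`. -/
noncomputable def Div (T : TriProd G H) (φ : VG × VH → ℤ) (u v : VG × VH) : ℤ :=
  (∑ w ∈ Finset.univ.filter (fun w => T.IsFace u v w), φ w)
    - (T.alpha u v u * φ u + T.alpha u v v * φ v)

/-- A divisor on the triangulated product (a function on edges, encoded as a
function on ordered pairs of vertices) is principal if it agrees with `Div φ`
on every edge, for some `φ`. -/
def Principal (T : TriProd G H) (D : VG × VH → VG × VH → ℤ) : Prop :=
  ∃ φ : VG × VH → ℤ, ∀ u v, T.Adj u v → D u v = T.Div φ u v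

/-- A divisor on the triangulated product is Cartier if near every vertex `x`
it agrees with a principal divisor on all edges containing `x`. -/
def Cartier (T : TriProd G H) (D : VG × VH → VG × VH → ℤ) : Prop :=
  ∀ x : VG × VH, ∃ φ : VG × VH → ℤ,
    ∀ u v, T.Adj u v → (x = u ∨ x = v) → D u v = T.Div φ u v

/-- A divisor is ℚ-Cartier if some nonzero integer multiple of it is Cartier. -/
def QCartier (T : TriProd G H) (D : VG × VH → VG × VH → ℤ) : Prop :=
  ∃ m : ℤ, m ≠ 0 ∧ T.Cartier (fun u v => m * D u v)

/-- The balancing conditions for a divisor `D` on the triangulated product. -/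
def Balanced (T : TriProd G H) (D : VG × VH → VG × VH → ℤ) : Prop :=
  ∀ a : VG, ∀ b : VH,
    (∀ x x' : VG, G.Adj a x → G.Adj a x' →
      (∑ c ∈ Finset.univ.filter (fun c : VH => T.Adj (a, b) (x, c)), D (a, b) (x, c)) =
      (∑ c ∈ Finset.univ.filter (fun c : VH => T.Adj (a, b) (x', c)), D (a, b) (x', c))) ∧
    (∀ y y' : VH, H.Adj b y → H.Adj b y' →
      (∑ c ∈ Finset.univ.filter (fun c : VG => T.Adj (a, b) (c, y)), D (a, b) (c, y)) =
      (∑ c ∈ Finset.univ.filter (fun c : VG => T.Adj (a, b) (c, y')), D (a, b) (c, y')))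

end TriProd

/-- The map `β` sending a pair of divisors on `G` and `H` to a divisor on the
triangulated product: `C(a)` on vertical edges `{(a,b),(a,b')}`, `D(b)` on
horizontal edges `{(a,b),(a',b)}`, and `0` on diagonal edges. -/
noncomputable def beta (C : VG → ℤ) (D : VH → ℤ) (u v : VG × VH) : ℤ :=
  if u.1 = v.1 then C u.1 else if u.2 = v.2 then D u.2 else 0

end TriangulatedProduct
section Aux

variable {VG VH : Type*} {G : SimpleGraph VG} {H : SimpleGraph VH}

namespace TriProd

lemma diag_ne_fst (T : TriProd G H) {a a' : VG} {b b' : VH}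
    (h : T.diag (a, b) (a', b')) : a ≠ a' := (T.diag_adj _ _ _ _ h).1.ne

lemma diag_ne_snd (T : TriProd G H) {a a' : VG} {b b' : VH}
    (h : T.diag (a, b) (a', b')) : b ≠ b' := (T.diag_adj _ _ _ _ h).2.ne

lemma triple_eq {u v w x y z : VG × VH}
    (h : ({u, v, w} : Finset (VG × VH)) = {x, y, z}) (t : VG × VH) :
    (t = u ∨ t = v ∨ t = w) ↔ (t = x ∨ t = y ∨ t = z) := by
  simpa using Finset.ext_iff.mp h t

lemma isFace_vert (T : TriProd G H) {a : VG} {b b' : VH} (hbb' : b ≠ b') (w : VG × VH) :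
    T.IsFace (a, b) (a, b') w ↔
      ∃ c, (w = (c, b) ∧ T.diag (a, b') (c, b)) ∨ (w = (c, b') ∧ T.diag (a, b) (c, b')) := by
  constructor
  · rintro ⟨c, c', d, d', hd, hset⟩
    have hcc' : c ≠ c' := T.diag_ne_fst hd
    have hdd' : d ≠ d' := T.diag_ne_snd hd
    have hm := triple_eq hset
    have hu := (hm (a, b)).mp (Or.inl rfl)
    have hv := (hm (a, b')).mp (Or.inr (Or.inl rfl))
    have hz := (hm (c, d)).mpr (Or.inl rfl)
    simp only [Prod.mk.injEq] at hu hv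
    rcases hu with ⟨rfl, rfl⟩ | ⟨rfl, rfl⟩ | ⟨rfl, rfl⟩
    · rcases hv with ⟨-, hb⟩ | ⟨hc, -⟩ | ⟨hc, -⟩
      · exact absurd hb.symm hbb'
      · exact absurd hc hcc'
      · exact absurd hc hcc'
    · -- u = (c', d') : c' = a, d' = b
      rcases hv with ⟨hc, -⟩ | ⟨-, hb⟩ | ⟨-, rfl⟩
      · exact absurd hc.symm hcc'
      · exact absurd hb.symm hbb'
      · rcases hz with hc | hc | hw
        · exact absurd (congrArg Prod.fst hc) hcc'
        · exact absurd (congrArg Prod.fst hc) hcc'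
        · exact ⟨c, Or.inr ⟨hw.symm, T.diag_symm _ _ hd⟩⟩
    · -- u = (c', d) : c' = a, d = b
      rcases hv with ⟨hc, -⟩ | ⟨-, rfl⟩ | ⟨-, hb⟩
      · exact absurd hc.symm hcc'
      · rcases hz with hc | hc | hw
        · exact absurd (congrArg Prod.fst hc) hcc'
        · exact absurd (congrArg Prod.fst hc) hcc'
        · exact ⟨c, Or.inl ⟨hw.symm, T.diag_symm _ _ hd⟩⟩
      · exact absurd hb.symm hbb'
  · rintro ⟨c, ⟨rfl, hd⟩ | ⟨rfl, hd⟩⟩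
    · refine ⟨c, a, b, b', T.diag_symm _ _ hd, ?_⟩
      ext t; simp only [Finset.mem_insert, Finset.mem_singleton]; tauto
    · refine ⟨c, a, b', b, T.diag_symm _ _ hd, ?_⟩
      ext t; simp only [Finset.mem_insert, Finset.mem_singleton]; tauto

lemma isFaceAvoiding_vert₁ (T : TriProd G H) {a : VG} {b b' : VH} (hbb' : b ≠ b') (w : VG × VH) :
    T.IsFaceAvoiding (a, b) (a, b') w (a, b) ↔
      ∃ c, w = (c, b) ∧ T.diag (a, b') (c, b) := by
  constructor
  · rintro ⟨c, c', d, d', hd, hset, hx1, hx2⟩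
    have hcc' : c ≠ c' := T.diag_ne_fst hd
    have hdd' : d ≠ d' := T.diag_ne_snd hd
    have hm := triple_eq hset
    have hu := (hm (a, b)).mp (Or.inl rfl)
    have hv := (hm (a, b')).mp (Or.inr (Or.inl rfl))
    have hz := (hm (c, d)).mpr (Or.inl rfl)
    simp only [Prod.mk.injEq] at hu hv
    rcases hu with ⟨rfl, rfl⟩ | ⟨rfl, rfl⟩ | ⟨rfl, rfl⟩
    · rcases hv with ⟨-, hb⟩ | ⟨hc, -⟩ | ⟨hc, -⟩
      · exact absurd hb.symm hbb'
      · exact absurd hc hcc'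
      · exact absurd hc hcc'
    · exact absurd rfl hx2
    · rcases hv with ⟨hc, -⟩ | ⟨-, rfl⟩ | ⟨-, hb⟩
      · exact absurd hc.symm hcc'
      · rcases hz with hc | hc | hw
        · exact absurd (congrArg Prod.fst hc) hcc'
        · exact absurd (congrArg Prod.fst hc) hcc'
        · exact ⟨c, hw.symm, T.diag_symm _ _ hd⟩
      · exact absurd hb.symm hbb'
  · rintro ⟨c, rfl, hd⟩
    have hac : a ≠ c := T.diag_ne_fst hd
    refine ⟨c, a, b, b', T.diag_symm _ _ hd, ?_, ?_, ?_⟩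
    · ext t; simp only [Finset.mem_insert, Finset.mem_singleton]; tauto
    · simp only [ne_eq, Prod.mk.injEq, not_and]
      intro h; exact absurd h hac
    · simp only [ne_eq, Prod.mk.injEq, not_and]
      intro _; exact hbb'

lemma isFaceAvoiding_vert₂ (T : TriProd G H) {a : VG} {b b' : VH} (hbb' : b ≠ b') (w : VG × VH) :
    T.IsFaceAvoiding (a, b) (a, b') w (a, b') ↔
      ∃ c, w = (c, b') ∧ T.diag (a, b) (c, b') := by
  constructor
  · rintro ⟨c, c', d, d', hd, hset, hx1, hx2⟩
    have hcc' : c ≠ c' := T.diag_ne_fst hd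
    have hdd' : d ≠ d' := T.diag_ne_snd hd
    have hm := triple_eq hset
    have hu := (hm (a, b)).mp (Or.inl rfl)
    have hv := (hm (a, b')).mp (Or.inr (Or.inl rfl))
    have hz := (hm (c, d)).mpr (Or.inl rfl)
    simp only [Prod.mk.injEq] at hu hv
    rcases hu with ⟨rfl, rfl⟩ | ⟨rfl, rfl⟩ | ⟨rfl, rfl⟩
    · rcases hv with ⟨-, hb⟩ | ⟨hc, -⟩ | ⟨hc, -⟩
      · exact absurd hb.symm hbb'
      · exact absurd hc hcc'
      · exact absurd hc hcc'
    · rcases hv with ⟨hc, -⟩ | ⟨-, hb⟩ | ⟨-, rfl⟩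
      · exact absurd hc.symm hcc'
      · exact absurd hb.symm hbb'
      · rcases hz with hc | hc | hw
        · exact absurd (congrArg Prod.fst hc) hcc'
        · exact absurd (congrArg Prod.fst hc) hcc'
        · exact ⟨c, hw.symm, T.diag_symm _ _ hd⟩
    · rcases hv with ⟨hc, -⟩ | ⟨-, rfl⟩ | ⟨-, hb⟩
      · exact absurd hc.symm hcc'
      · exact absurd rfl hx2
      · exact absurd hb.symm hbb'
  · rintro ⟨c, rfl, hd⟩
    have hac : a ≠ c := T.diag_ne_fst hd
    refine ⟨c, a, b', b, T.diag_symm _ _ hd, ?_, ?_, ?_⟩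
    · ext t; simp only [Finset.mem_insert, Finset.mem_singleton]; tauto
    · simp only [ne_eq, Prod.mk.injEq, not_and]
      intro h; exact absurd h hac
    · simp only [ne_eq, Prod.mk.injEq, not_and]
      intro _; exact hbb'.symm

end TriProd

end Aux
section Aux2

variable {VG VH : Type*} {G : SimpleGraph VG} {H : SimpleGraph VH}

namespace TriProd

lemma isFace_horiz (T : TriProd G H) {a a' : VG} {b : VH} (haa' : a ≠ a') (w : VG × VH) :
    T.IsFace (a, b) (a', b) w ↔
      ∃ e, (w = (a, e) ∧ T.diag (a', b) (a, e)) ∨ (w = (a', e) ∧ T.diag (a, b) (a', e)) := by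
  constructor
  · rintro ⟨c, c', d, d', hd, hset⟩
    have hcc' : c ≠ c' := T.diag_ne_fst hd
    have hdd' : d ≠ d' := T.diag_ne_snd hd
    have hm := triple_eq hset
    have hu := (hm (a, b)).mp (Or.inl rfl)
    have hv := (hm (a', b)).mp (Or.inr (Or.inl rfl))
    have hz := (hm (c', d')).mpr (Or.inr (Or.inl rfl))
    simp only [Prod.mk.injEq] at hu hv
    rcases hu with ⟨rfl, rfl⟩ | ⟨rfl, rfl⟩ | ⟨rfl, rfl⟩
    · rcases hv with ⟨hc, -⟩ | ⟨-, hb⟩ | ⟨rfl, -⟩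
      · exact absurd hc.symm haa'
      · exact absurd hb hdd'
      · rcases hz with hc | hc | hw
        · exact absurd (congrArg Prod.fst hc).symm haa'
        · exact absurd (congrArg Prod.snd hc).symm hdd'
        · exact ⟨d', Or.inr ⟨hw.symm, hd⟩⟩
    · rcases hv with ⟨-, hb⟩ | ⟨hc, -⟩ | ⟨hc, -⟩
      · exact absurd hb.symm hdd'
      · exact absurd hc.symm haa'
      · exact absurd hc.symm haa'
    · rcases hv with ⟨rfl, -⟩ | ⟨hc, -⟩ | ⟨hc, -⟩
      · rcases hz with hc | hc | hw
        · exact absurd (congrArg Prod.snd hc).symm hdd'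
        · exact absurd (congrArg Prod.fst hc) haa'
        · exact ⟨d', Or.inl ⟨hw.symm, hd⟩⟩
      · exact absurd hc.symm haa'
      · exact absurd hc.symm haa'
  · rintro ⟨e, ⟨rfl, hd⟩ | ⟨rfl, hd⟩⟩
    · refine ⟨a', a, b, e, hd, ?_⟩
      ext t; simp only [Finset.mem_insert, Finset.mem_singleton]; tauto
    · refine ⟨a, a', b, e, hd, ?_⟩
      ext t; simp only [Finset.mem_insert, Finset.mem_singleton]; tauto

lemma isFaceAvoiding_horiz₁ (T : TriProd G H) {a a' : VG} {b : VH} (haa' : a ≠ a') (w : VG × VH) :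
    T.IsFaceAvoiding (a, b) (a', b) w (a, b) ↔
      ∃ e, w = (a, e) ∧ T.diag (a', b) (a, e) := by
  constructor
  · rintro ⟨c, c', d, d', hd, hset, hx1, hx2⟩
    have hcc' : c ≠ c' := T.diag_ne_fst hd
    have hdd' : d ≠ d' := T.diag_ne_snd hd
    have hm := triple_eq hset
    have hu := (hm (a, b)).mp (Or.inl rfl)
    have hv := (hm (a', b)).mp (Or.inr (Or.inl rfl))
    have hz := (hm (c', d')).mpr (Or.inr (Or.inl rfl))
    simp only [Prod.mk.injEq] at hu hv
    rcases hu with ⟨rfl, rfl⟩ | ⟨rfl, rfl⟩ | ⟨rfl, rfl⟩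
    · exact absurd rfl hx1
    · rcases hv with ⟨-, hb⟩ | ⟨hc, -⟩ | ⟨hc, -⟩
      · exact absurd hb.symm hdd'
      · exact absurd hc.symm haa'
      · exact absurd hc.symm haa'
    · rcases hv with ⟨rfl, -⟩ | ⟨hc, -⟩ | ⟨hc, -⟩
      · rcases hz with hc | hc | hw
        · exact absurd (congrArg Prod.snd hc).symm hdd'
        · exact absurd (congrArg Prod.fst hc) haa'
        · exact ⟨d', hw.symm, hd⟩
      · exact absurd hc.symm haa'
      · exact absurd hc.symm haa'
  · rintro ⟨e, rfl, hd⟩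
    have hbe : b ≠ e := T.diag_ne_snd hd
    refine ⟨a', a, b, e, hd, ?_, ?_, ?_⟩
    · ext t; simp only [Finset.mem_insert, Finset.mem_singleton]; tauto
    · exact fun hcon => haa' (congrArg Prod.fst hcon)
    · exact fun hcon => hbe (congrArg Prod.snd hcon)

lemma isFaceAvoiding_horiz₂ (T : TriProd G H) {a a' : VG} {b : VH} (haa' : a ≠ a') (w : VG × VH) :
    T.IsFaceAvoiding (a, b) (a', b) w (a', b) ↔
      ∃ e, w = (a', e) ∧ T.diag (a, b) (a', e) := by
  constructor
  · rintro ⟨c, c', d, d', hd, hset, hx1, hx2⟩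
    have hcc' : c ≠ c' := T.diag_ne_fst hd
    have hdd' : d ≠ d' := T.diag_ne_snd hd
    have hm := triple_eq hset
    have hu := (hm (a, b)).mp (Or.inl rfl)
    have hv := (hm (a', b)).mp (Or.inr (Or.inl rfl))
    have hz := (hm (c', d')).mpr (Or.inr (Or.inl rfl))
    simp only [Prod.mk.injEq] at hu hv
    rcases hu with ⟨rfl, rfl⟩ | ⟨rfl, rfl⟩ | ⟨rfl, rfl⟩
    · rcases hv with ⟨hc, -⟩ | ⟨-, hb⟩ | ⟨rfl, -⟩
      · exact absurd hc.symm haa'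
      · exact absurd hb hdd'
      · rcases hz with hc | hc | hw
        · exact absurd (congrArg Prod.fst hc).symm haa'
        · exact absurd (congrArg Prod.snd hc).symm hdd'
        · exact ⟨d', hw.symm, hd⟩
    · rcases hv with ⟨-, hb⟩ | ⟨hc, -⟩ | ⟨hc, -⟩
      · exact absurd hb.symm hdd'
      · exact absurd hc.symm haa'
      · exact absurd hc.symm haa'
    · rcases hv with ⟨rfl, -⟩ | ⟨hc, -⟩ | ⟨hc, -⟩
      · exact absurd rfl hx1
      · exact absurd hc.symm haa'
      · exact absurd hc.symm haa'
  · rintro ⟨e, rfl, hd⟩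
    have hbe : b ≠ e := T.diag_ne_snd hd
    refine ⟨a, a', b, e, hd, ?_, ?_, ?_⟩
    · ext t; simp only [Finset.mem_insert, Finset.mem_singleton]; tauto
    · exact fun hcon => haa' (congrArg Prod.fst hcon).symm
    · exact fun hcon => hbe (congrArg Prod.snd hcon)

lemma isFace_diag (T : TriProd G H) {a a' : VG} {b b' : VH}
    (hd : T.diag (a, b) (a', b')) (w : VG × VH) :
    T.IsFace (a, b) (a', b') w ↔ w = (a', b) ∨ w = (a, b') := by
  have haa' : a ≠ a' := T.diag_ne_fst hd
  have hbb' : b ≠ b' := T.diag_ne_snd hd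
  constructor
  · rintro ⟨c, c', d, d', hd0, hset⟩
    have hcc' : c ≠ c' := T.diag_ne_fst hd0
    have hdd' : d ≠ d' := T.diag_ne_snd hd0
    have hm := triple_eq hset
    have hu := (hm (a, b)).mp (Or.inl rfl)
    have hv := (hm (a', b')).mp (Or.inr (Or.inl rfl))
    have hz := (hm (c', d)).mpr (Or.inr (Or.inr rfl))
    simp only [Prod.mk.injEq] at hu hv
    rcases hu with ⟨rfl, rfl⟩ | ⟨rfl, rfl⟩ | ⟨rfl, rfl⟩
    · rcases hv with ⟨hc, -⟩ | ⟨rfl, rfl⟩ | ⟨-, hb⟩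
      · exact absurd hc.symm haa'
      · rcases hz with hc | hc | hw
        · exact absurd (congrArg Prod.fst hc).symm haa'
        · exact absurd (congrArg Prod.snd hc) hbb'
        · exact Or.inl hw.symm
      · exact absurd hb.symm hbb'
    · rcases hv with ⟨rfl, rfl⟩ | ⟨hc, -⟩ | ⟨hc, -⟩
      · rcases hz with hc | hc | hw
        · exact absurd (congrArg Prod.snd hc) hdd'
        · exact absurd (congrArg Prod.fst hc) haa'
        · exact Or.inr hw.symm
      · exact absurd hc.symm haa'
      · exact absurd hc.symm haa'
    · rcases hv with ⟨-, hb⟩ | ⟨hc, -⟩ | ⟨hc, -⟩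
      · exact absurd hb.symm hbb'
      · exact absurd hc.symm haa'
      · exact absurd hc.symm haa'
  · rintro (rfl | rfl)
    · exact ⟨a, a', b, b', hd, rfl⟩
    · refine ⟨a', a, b', b, T.diag_symm _ _ hd, ?_⟩
      ext t; simp only [Finset.mem_insert, Finset.mem_singleton]; tauto

end TriProd

end Aux2
section Aux3

variable {VG VH : Type*} {G : SimpleGraph VG} {H : SimpleGraph VH}

namespace TriProd

variable [Fintype VG] [Fintype VH]

lemma alpha_diag₁ (T : TriProd G H) {u v : VG × VH} (hd : T.diag u v) :
    T.alpha u v u = 1 := by simp [alpha, hd]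

lemma alpha_diag₂ (T : TriProd G H) {u v : VG × VH} (hd : T.diag u v) :
    T.alpha u v v = 1 := by simp [alpha, hd]

lemma div_diag (T : TriProd G H) {a a' : VG} {b b' : VH}
    (hd : T.diag (a, b) (a', b')) (φ : VG × VH → ℤ) :
    T.Div φ (a, b) (a', b') = φ (a', b) + φ (a, b') - φ (a, b) - φ (a', b') := by
  have haa' : a ≠ a' := T.diag_ne_fst hd
  have hne : ((a', b) : VG × VH) ≠ (a, b') :=
    fun hcon => haa' (congrArg Prod.fst hcon).symm
  have hset : Finset.univ.filter (fun w => T.IsFace (a, b) (a', b') w)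
      = {(a', b), (a, b')} := by
    ext w
    simp [T.isFace_diag hd]
  rw [Div, hset, Finset.sum_pair hne, T.alpha_diag₁ hd, T.alpha_diag₂ hd]
  ring

lemma div_vert_eq (T : TriProd G H) {a : VG} {b b' : VH} (hbb' : H.Adj b b')
    (f : VG → ℤ) (g : VH → ℤ) :
    T.Div (fun p => f p.1 + g p.2) (a, b) (a, b') =
      ∑ c ∈ Finset.univ.filter (fun c => G.Adj a c), (f c - f a) := by
  have hbne : b ≠ b' := hbb'.ne
  have hnd : ¬ T.diag (a, b) (a, b') := fun hd => (T.diag_ne_fst hd) rfl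
  set S := Finset.univ.filter (fun w => T.IsFace (a, b) (a, b') w) with hS
  set A := Finset.univ.filter (fun w => T.IsFaceAvoiding (a, b) (a, b') w (a, b)) with hA
  set B := Finset.univ.filter (fun w => T.IsFaceAvoiding (a, b) (a, b') w (a, b')) with hB
  have hmemA : ∀ w, w ∈ A ↔ ∃ c, w = (c, b) ∧ T.diag (a, b') (c, b) := by
    intro w; simp [hA, T.isFaceAvoiding_vert₁ hbne]
  have hmemB : ∀ w, w ∈ B ↔ ∃ c, w = (c, b') ∧ T.diag (a, b) (c, b') := by
    intro w; simp [hB, T.isFaceAvoiding_vert₂ hbne]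
  have hmemS : ∀ w, w ∈ S ↔ (w ∈ A ∨ w ∈ B) := by
    intro w
    rw [hmemA, hmemB]
    simp only [hS, Finset.mem_filter, Finset.mem_univ, true_and,
      T.isFace_vert hbne, ← exists_or]
  have hdisj : Disjoint A B := by
    rw [Finset.disjoint_left]
    intro w hwA hwB
    obtain ⟨c, rfl, -⟩ := (hmemA w).mp hwA
    obtain ⟨c', heq, -⟩ := (hmemB _).mp hwB
    exact hbne (congrArg Prod.snd heq)
  have hSAB : S = A ∪ B := by
    ext w; rw [Finset.mem_union, hmemS]
  have hsndA : ∀ w ∈ A, w.2 = b := by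
    intro w hw; obtain ⟨c, rfl, -⟩ := (hmemA w).mp hw; rfl
  have hsndB : ∀ w ∈ B, w.2 = b' := by
    intro w hw; obtain ⟨c, rfl, -⟩ := (hmemB w).mp hw; rfl
  have ha1 : T.alpha (a, b) (a, b') (a, b) = (A.card : ℤ) := by
    rw [alpha, if_pos (Or.inl rfl), if_neg hnd, hA]
  have ha2 : T.alpha (a, b) (a, b') (a, b') = (B.card : ℤ) := by
    rw [alpha, if_pos (Or.inr rfl), if_neg hnd, hB]
  have hsum : ∑ w ∈ S, (f w.1 + g w.2)
      = (∑ w ∈ A, f w.1 + (A.card : ℤ) * g b) + (∑ w ∈ B, f w.1 + (B.card : ℤ) * g b') := by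
    rw [hSAB, Finset.sum_union hdisj]
    congr 1
    · rw [Finset.sum_congr rfl (fun w hw => by rw [hsndA w hw])]
      rw [Finset.sum_add_distrib, Finset.sum_const, nsmul_eq_mul]
    · rw [Finset.sum_congr rfl (fun w hw => by rw [hsndB w hw])]
      rw [Finset.sum_add_distrib, Finset.sum_const, nsmul_eq_mul]
  have hkey : T.Div (fun p => f p.1 + g p.2) (a, b) (a, b')
      = ∑ w ∈ S, (f w.1 - f a) := by
    rw [Div, ← hS, ha1, ha2]
    simp only [hsum]
    rw [hSAB, Finset.sum_union hdisj, Finset.sum_sub_distrib, Finset.sum_sub_distrib,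
      Finset.sum_const, Finset.sum_const, nsmul_eq_mul, nsmul_eq_mul]
    ring
  rw [hkey]
  refine Finset.sum_bij (fun w _ => w.1) ?_ ?_ ?_ ?_
  · intro w hw
    rcases (hmemS w).mp hw with hwa | hwb
    · obtain ⟨c, rfl, hd⟩ := (hmemA w).mp hwa
      simpa using (T.diag_adj _ _ _ _ hd).1
    · obtain ⟨c, rfl, hd⟩ := (hmemB w).mp hwb
      simpa using (T.diag_adj _ _ _ _ hd).1
  · intro w1 hw1 w2 hw2 heq
    rcases (hmemS w1).mp hw1 with h1 | h1 <;> rcases (hmemS w2).mp hw2 with h2 | h2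
    · obtain ⟨c, rfl, -⟩ := (hmemA w1).mp h1
      obtain ⟨c', rfl, -⟩ := (hmemA w2).mp h2
      simp_all
    · obtain ⟨c, rfl, hd1⟩ := (hmemA w1).mp h1
      obtain ⟨c', rfl, hd2⟩ := (hmemB w2).mp h2
      simp only at heq
      subst heq
      have hac : G.Adj a c := (T.diag_adj _ _ _ _ hd1).1
      rcases T.diag_choice a c b b' hac hbb' with ⟨-, hn⟩ | ⟨hn, -⟩
      · exact absurd hd1 hn
      · exact absurd hd2 hn
    · obtain ⟨c, rfl, hd1⟩ := (hmemB w1).mp h1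
      obtain ⟨c', rfl, hd2⟩ := (hmemA w2).mp h2
      simp only at heq
      subst heq
      have hac : G.Adj a c := (T.diag_adj _ _ _ _ hd2).1
      rcases T.diag_choice a c b b' hac hbb' with ⟨-, hn⟩ | ⟨hn, -⟩
      · exact absurd hd2 hn
      · exact absurd hd1 hn
    · obtain ⟨c, rfl, -⟩ := (hmemB w1).mp h1
      obtain ⟨c', rfl, -⟩ := (hmemB w2).mp h2
      simp_all
  · intro c hc
    have hac : G.Adj a c := by simpa using hc
    rcases T.diag_choice a c b b' hac hbb' with ⟨hd, -⟩ | ⟨-, hd⟩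
    · refine ⟨(c, b'), ?_, rfl⟩
      exact (hmemS _).mpr (Or.inr ((hmemB _).mpr ⟨c, rfl, hd⟩))
    · refine ⟨(c, b), ?_, rfl⟩
      exact (hmemS _).mpr (Or.inl ((hmemA _).mpr ⟨c, rfl, hd⟩))
  · intro w hw; rfl

lemma div_horiz_eq (T : TriProd G H) {a a' : VG} {b : VH} (haa' : G.Adj a a')
    (f : VG → ℤ) (g : VH → ℤ) :
    T.Div (fun p => f p.1 + g p.2) (a, b) (a', b) =
      ∑ e ∈ Finset.univ.filter (fun e => H.Adj b e), (g e - g b) := by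
  have hane : a ≠ a' := haa'.ne
  have hnd : ¬ T.diag (a, b) (a', b) := fun hd => (T.diag_ne_snd hd) rfl
  set S := Finset.univ.filter (fun w => T.IsFace (a, b) (a', b) w) with hS
  set A := Finset.univ.filter (fun w => T.IsFaceAvoiding (a, b) (a', b) w (a, b)) with hA
  set B := Finset.univ.filter (fun w => T.IsFaceAvoiding (a, b) (a', b) w (a', b)) with hB
  have hmemA : ∀ w, w ∈ A ↔ ∃ e, w = (a, e) ∧ T.diag (a', b) (a, e) := by
    intro w; simp [hA, T.isFaceAvoiding_horiz₁ hane]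
  have hmemB : ∀ w, w ∈ B ↔ ∃ e, w = (a', e) ∧ T.diag (a, b) (a', e) := by
    intro w; simp [hB, T.isFaceAvoiding_horiz₂ hane]
  have hmemS : ∀ w, w ∈ S ↔ (w ∈ A ∨ w ∈ B) := by
    intro w
    rw [hmemA, hmemB]
    simp only [hS, Finset.mem_filter, Finset.mem_univ, true_and,
      T.isFace_horiz hane, ← exists_or]
  have hdisj : Disjoint A B := by
    rw [Finset.disjoint_left]
    intro w hwA hwB
    obtain ⟨c, rfl, -⟩ := (hmemA w).mp hwA
    obtain ⟨c', heq, -⟩ := (hmemB _).mp hwB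
    exact hane (congrArg Prod.fst heq)
  have hSAB : S = A ∪ B := by
    ext w; rw [Finset.mem_union, hmemS]
  have hfstA : ∀ w ∈ A, w.1 = a := by
    intro w hw; obtain ⟨c, rfl, -⟩ := (hmemA w).mp hw; rfl
  have hfstB : ∀ w ∈ B, w.1 = a' := by
    intro w hw; obtain ⟨c, rfl, -⟩ := (hmemB w).mp hw; rfl
  have ha1 : T.alpha (a, b) (a', b) (a, b) = (A.card : ℤ) := by
    rw [alpha, if_pos (Or.inl rfl), if_neg hnd, hA]
  have ha2 : T.alpha (a, b) (a', b) (a', b) = (B.card : ℤ) := by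
    rw [alpha, if_pos (Or.inr rfl), if_neg hnd, hB]
  have hsum : ∑ w ∈ S, (f w.1 + g w.2)
      = ((A.card : ℤ) * f a + ∑ w ∈ A, g w.2) + ((B.card : ℤ) * f a' + ∑ w ∈ B, g w.2) := by
    rw [hSAB, Finset.sum_union hdisj]
    congr 1
    · rw [Finset.sum_congr rfl (fun w hw => by rw [hfstA w hw])]
      rw [Finset.sum_add_distrib, Finset.sum_const, nsmul_eq_mul]
    · rw [Finset.sum_congr rfl (fun w hw => by rw [hfstB w hw])]
      rw [Finset.sum_add_distrib, Finset.sum_const, nsmul_eq_mul]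
  have hkey : T.Div (fun p => f p.1 + g p.2) (a, b) (a', b)
      = ∑ w ∈ S, (g w.2 - g b) := by
    rw [Div, ← hS, ha1, ha2]
    simp only [hsum]
    rw [hSAB, Finset.sum_union hdisj, Finset.sum_sub_distrib, Finset.sum_sub_distrib,
      Finset.sum_const, Finset.sum_const, nsmul_eq_mul, nsmul_eq_mul]
    ring
  rw [hkey]
  refine Finset.sum_bij (fun w _ => w.2) ?_ ?_ ?_ ?_
  · intro w hw
    rcases (hmemS w).mp hw with hwa | hwb
    · obtain ⟨c, rfl, hd⟩ := (hmemA w).mp hwa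
      simpa using (T.diag_adj _ _ _ _ hd).2
    · obtain ⟨c, rfl, hd⟩ := (hmemB w).mp hwb
      simpa using (T.diag_adj _ _ _ _ hd).2
  · intro w1 hw1 w2 hw2 heq
    rcases (hmemS w1).mp hw1 with h1 | h1 <;> rcases (hmemS w2).mp hw2 with h2 | h2
    · obtain ⟨c, rfl, -⟩ := (hmemA w1).mp h1
      obtain ⟨c', rfl, -⟩ := (hmemA w2).mp h2
      simp_all
    · obtain ⟨c, rfl, hd1⟩ := (hmemA w1).mp h1
      obtain ⟨c', rfl, hd2⟩ := (hmemB w2).mp h2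
      simp only at heq
      subst heq
      have hbe : H.Adj b c := (T.diag_adj _ _ _ _ hd1).2
      rcases T.diag_choice a a' b c haa' hbe with ⟨hn1, hn2⟩ | ⟨hn1, hn2⟩
      · exact absurd (T.diag_symm _ _ hd1) hn2
      · exact absurd hd2 hn1
    · obtain ⟨c, rfl, hd1⟩ := (hmemB w1).mp h1
      obtain ⟨c', rfl, hd2⟩ := (hmemA w2).mp h2
      simp only at heq
      subst heq
      have hbe : H.Adj b c := (T.diag_adj _ _ _ _ hd2).2
      rcases T.diag_choice a a' b c haa' hbe with ⟨hn1, hn2⟩ | ⟨hn1, hn2⟩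
      · exact absurd (T.diag_symm _ _ hd2) hn2
      · exact absurd hd1 hn1
    · obtain ⟨c, rfl, -⟩ := (hmemB w1).mp h1
      obtain ⟨c', rfl, -⟩ := (hmemB w2).mp h2
      simp_all
  · intro e he
    have hbe : H.Adj b e := by simpa using he
    rcases T.diag_choice a a' b e haa' hbe with ⟨hd, -⟩ | ⟨-, hd⟩
    · refine ⟨(a', e), ?_, rfl⟩
      exact (hmemS _).mpr (Or.inr ((hmemB _).mpr ⟨e, rfl, hd⟩))
    · refine ⟨(a, e), ?_, rfl⟩
      exact (hmemS _).mpr (Or.inl ((hmemA _).mpr ⟨e, rfl, T.diag_symm _ _ hd⟩))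
  · intro w hw; rfl

end TriProd

lemma lap_sum {VG : Type*} [Fintype VG] (G : SimpleGraph VG) (f : VG → ℤ) (a : VG) :
    ∑ w, f w * lapCol G w a = ∑ c ∈ Finset.univ.filter (fun c => G.Adj a c), (f c - f a) := by
  have h1 : ∀ w, f w * lapCol G w a =
      (if w = a then -(((Finset.univ.filter (fun u => G.Adj a u)).card : ℤ)) * f a else 0)
      + (if G.Adj a w then f w else 0) := by
    intro w
    by_cases hw : w = a
    · subst hw
      simp only [lapCol, if_pos rfl, G.irrefl, if_neg, if_false]
      simp [G.irrefl]
      ring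
    · rw [lapCol, if_neg (Ne.symm hw), if_neg hw]
      by_cases hadj : G.Adj a w
      · rw [if_pos hadj, if_pos hadj]; ring
      · rw [if_neg hadj, if_neg hadj]; ring
  rw [Finset.sum_congr rfl (fun w _ => h1 w), Finset.sum_add_distrib]
  rw [Finset.sum_ite_eq' Finset.univ a
    (fun _ => -(((Finset.univ.filter (fun u => G.Adj a u)).card : ℤ)) * f a)]
  rw [← Finset.sum_filter, Finset.sum_sub_distrib, Finset.sum_const, nsmul_eq_mul]
  simp
  ring

lemma walk_const {V : Type*} {G : SimpleGraph V} (hG : G.Connected) (F : V → ℤ)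
    (h : ∀ a a', G.Adj a a' → F a = F a') (a a' : V) : F a = F a' := by
  obtain ⟨w⟩ := hG.preconnected a a'
  induction w with
  | nil => rfl
  | cons hadj p ih => exact (h _ _ hadj).trans ih

end Aux3

/-- The homomorphism `γ : Pic(G) × Pic(H) → Pic(Δ)` induced by `β`
is injective: if `β(C, D)` and `β(C', D')` are linearly equivalent on the
triangulated product `Δ`, then `C` is linearly equivalent to `C'` on `G` and
`D` is linearly equivalent to `D'` on `H`. -/
theorem gamma_injective {VG VH : Type*} [Fintype VG] [Fintype VH]
    (G : SimpleGraph VG) (H : SimpleGraph VH)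
    (hG : G.Connected) (hH : H.Connected)
    (hGe : ∃ a a', G.Adj a a') (hHe : ∃ b b', H.Adj b b')
    (T : TriProd G H)
    (C C' : VG → ℤ) (D D' : VH → ℤ)
    (h : T.Principal (fun u v => beta C D u v - beta C' D' u v)) :
    GraphPrincipal G (fun a => C a - C' a) ∧ GraphPrincipal H (fun b => D b - D' b) := by
  obtain ⟨φ, hφ⟩ := h
  obtain ⟨a₀, a₀', hG0⟩ := hGe
  obtain ⟨b₀, b₀', hH0⟩ := hHe
  have hsq : ∀ a a' b b', G.Adj a a' → H.Adj b b' →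
      φ (a, b) + φ (a', b') = φ (a', b) + φ (a, b') := by
    intro a a' b b' hga hhb
    rcases T.diag_choice a a' b b' hga hhb with ⟨hd, -⟩ | ⟨-, hd⟩
    · have he := hφ (a, b) (a', b') (Or.inr (Or.inr hd))
      rw [T.div_diag hd] at he
      have hb0 : beta C D (a, b) (a', b') = 0 := by
        simp [beta, hga.ne, hhb.ne]
      have hb0' : beta C' D' (a, b) (a', b') = 0 := by
        simp [beta, hga.ne, hhb.ne]
      simp only [hb0, hb0'] at he
      linarith
    · have he := hφ (a, b') (a', b) (Or.inr (Or.inr hd))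
      rw [T.div_diag hd] at he
      have hb0 : beta C D (a, b') (a', b) = 0 := by
        simp [beta, hga.ne, hhb.ne.symm]
      have hb0' : beta C' D' (a, b') (a', b) = 0 := by
        simp [beta, hga.ne, hhb.ne.symm]
      simp only [hb0, hb0'] at he
      linarith
  have hsq2 : ∀ a a', G.Adj a a' → ∀ b b', φ (a, b) - φ (a', b) = φ (a, b') - φ (a', b') := by
    intro a a' hga b b'
    exact walk_const hH (fun c => φ (a, c) - φ (a', c))
      (fun c c' hcc => by
        have := hsq a a' c c' hga hcc
        show φ (a, c) - φ (a', c) = φ (a, c') - φ (a', c')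
        linarith) b b'
  have hsq3 : ∀ a a' b b', φ (a, b) - φ (a, b') = φ (a', b) - φ (a', b') := by
    intro a a' b b'
    exact walk_const hG (fun c => φ (c, b) - φ (c, b'))
      (fun c c' hcc => by
        have := hsq2 c c' hcc b b'
        show φ (c, b) - φ (c, b') = φ (c', b) - φ (c', b')
        linarith) a a'
  set f : VG → ℤ := fun a => φ (a, b₀) with hf
  set g : VH → ℤ := fun b => φ (a₀, b) - φ (a₀, b₀) with hg
  have hφeq : φ = fun p => f p.1 + g p.2 := by
    funext p
    obtain ⟨a, b⟩ := p
    have h2 := hsq3 a a₀ b b₀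
    show φ (a, b) = φ (a, b₀) + (φ (a₀, b) - φ (a₀, b₀))
    linarith
  constructor
  · refine ⟨f, fun a => ?_⟩
    have he := hφ (a, b₀) (a, b₀') (Or.inr (Or.inl ⟨rfl, hH0⟩))
    have hbv : beta C D (a, b₀) (a, b₀') = C a := by simp [beta]
    have hbv' : beta C' D' (a, b₀) (a, b₀') = C' a := by simp [beta]
    simp only [hbv, hbv'] at he
    rw [lap_sum G f a, ← T.div_vert_eq hH0 f g, ← hφeq]
    exact he
  · refine ⟨g, fun b => ?_⟩
    have he := hφ (a₀, b) (a₀', b) (Or.inl ⟨rfl, hG0⟩)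
    have hbv : beta C D (a₀, b) (a₀', b) = D b := by simp [beta, hG0.ne]
    have hbv' : beta C' D' (a₀, b) (a₀', b) = D' b := by simp [beta, hG0.ne]
    simp only [hbv, hbv'] at he
    rw [lap_sum H g b, ← T.div_horiz_eq hG0 f g, ← hφeq]
    exact he
end

section
/- Every divisor D on a triangulated product Δ of G and H that satisfies the balancing conditions is ℚ-Cartier. -/
open scoped Classical
open Finset

section MyAux

open TriProd

variable {VG VH : Type*} {G : SimpleGraph VG} {H : SimpleGraph VH}

lemma triple_horiz {a a' c c' : VG} {b y y' : VH} {w : VG × VH}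
    (haa' : a ≠ a') (hcc' : c ≠ c') (hyy' : y ≠ y')
    (heq : ({(a,b),(a',b),w} : Finset (VG × VH)) = {(c,y),(c',y'),(c',y)}) :
    (c = a ∧ y = b ∧ c' = a' ∧ w = (a', y')) ∨ (c = a' ∧ y = b ∧ c' = a ∧ w = (a, y')) := by
  classical
  have h1 : ((a,b) : VG × VH) ∈ ({(c,y),(c',y'),(c',y)} : Finset (VG × VH)) := heq ▸ (by simp)
  have h2 : ((a',b) : VG × VH) ∈ ({(c,y),(c',y'),(c',y)} : Finset (VG × VH)) := heq ▸ (by simp)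
  have h3 : ((c',y') : VG × VH) ∈ ({(a,b),(a',b),w} : Finset (VG × VH)) := by rw [heq]; simp
  simp only [Finset.mem_insert, Finset.mem_singleton, Prod.mk.injEq] at h1 h2 h3
  rcases h1 with ⟨hc,hy⟩|⟨hc,hy⟩|⟨hc,hy⟩ <;> rcases h2 with ⟨hc2,hy2⟩|⟨hc2,hy2⟩|⟨hc2,hy2⟩ <;>
    subst_vars <;> simp_all <;> tauto

lemma triple_vert {a c c' : VG} {b b' y y' : VH} {w : VG × VH}
    (hbb' : b ≠ b') (hcc' : c ≠ c') (hyy' : y ≠ y')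
    (heq : ({(a,b),(a,b'),w} : Finset (VG × VH)) = {(c,y),(c',y'),(c',y)}) :
    (c' = a ∧ y = b ∧ y' = b' ∧ w = (c, b)) ∨ (c' = a ∧ y = b' ∧ y' = b ∧ w = (c, b')) := by
  classical
  have h1 : ((a,b) : VG × VH) ∈ ({(c,y),(c',y'),(c',y)} : Finset (VG × VH)) := heq ▸ (by simp)
  have h2 : ((a,b') : VG × VH) ∈ ({(c,y),(c',y'),(c',y)} : Finset (VG × VH)) := heq ▸ (by simp)
  have h3 : ((c,y) : VG × VH) ∈ ({(a,b),(a,b'),w} : Finset (VG × VH)) := by rw [heq]; simp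
  simp only [Finset.mem_insert, Finset.mem_singleton, Prod.mk.injEq] at h1 h2 h3
  rcases h1 with ⟨hc,hy⟩|⟨hc,hy⟩|⟨hc,hy⟩ <;> rcases h2 with ⟨hc2,hy2⟩|⟨hc2,hy2⟩|⟨hc2,hy2⟩ <;>
    subst_vars <;> simp_all <;> tauto

lemma triple_diag {a a' c c' : VG} {b b' y y' : VH} {w : VG × VH}
    (haa' : a ≠ a') (hbb' : b ≠ b') (hcc' : c ≠ c') (hyy' : y ≠ y')
    (heq : ({(a,b),(a',b'),w} : Finset (VG × VH)) = {(c,y),(c',y'),(c',y)}) :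
    (c = a ∧ y = b ∧ c' = a' ∧ y' = b' ∧ w = (a', b)) ∨
    (c = a' ∧ y = b' ∧ c' = a ∧ y' = b ∧ w = (a, b')) := by
  classical
  have h1 : ((a,b) : VG × VH) ∈ ({(c,y),(c',y'),(c',y)} : Finset (VG × VH)) := heq ▸ (by simp)
  have h2 : ((a',b') : VG × VH) ∈ ({(c,y),(c',y'),(c',y)} : Finset (VG × VH)) := heq ▸ (by simp)
  have h3 : ((c',y) : VG × VH) ∈ ({(a,b),(a',b'),w} : Finset (VG × VH)) := by rw [heq]; simp
  simp only [Finset.mem_insert, Finset.mem_singleton, Prod.mk.injEq] at h1 h2 h3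
  rcases h1 with ⟨hc,hy⟩|⟨hc,hy⟩|⟨hc,hy⟩ <;> rcases h2 with ⟨hc2,hy2⟩|⟨hc2,hy2⟩|⟨hc2,hy2⟩ <;>
    subst_vars <;> simp_all <;> tauto

-- face characterizations
lemma isFace_diag (T : TriProd G H) {a a' : VG} {b b' : VH} (hd : T.diag (a,b) (a',b'))
    {w : VG × VH} :
    T.IsFace (a,b) (a',b') w ↔ (w = (a',b) ∨ w = (a,b')) := by
  obtain ⟨hGa, hHb⟩ := T.diag_adj _ _ _ _ hd
  constructor
  · rintro ⟨c, c', y, y', hd', heq⟩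
    rcases triple_diag hGa.ne hHb.ne ((T.diag_adj _ _ _ _ hd').1.ne)
      ((T.diag_adj _ _ _ _ hd').2.ne) heq with ⟨_,_,_,_,hw⟩|⟨_,_,_,_,hw⟩ <;> tauto
  · rintro (rfl | rfl)
    · exact ⟨a, a', b, b', hd, rfl⟩
    · refine ⟨a', a, b', b, T.diag_symm _ _ hd, ?_⟩
      ext z; simp only [Finset.mem_insert, Finset.mem_singleton]; tauto

lemma isFace_horiz (T : TriProd G H) {a a' : VG} {b : VH} (hGa : G.Adj a a') {w : VG × VH} :
    T.IsFace (a,b) (a',b) w ↔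
      ((∃ y', T.diag (a,b) (a',y') ∧ w = (a',y')) ∨ (∃ y', T.diag (a',b) (a,y') ∧ w = (a,y'))) := by
  constructor
  · rintro ⟨c, c', y, y', hd', heq⟩
    rcases triple_horiz hGa.ne ((T.diag_adj _ _ _ _ hd').1.ne)
      ((T.diag_adj _ _ _ _ hd').2.ne) heq with ⟨hc,hy,hc',hw⟩|⟨hc,hy,hc',hw⟩
    · subst hc; subst hy; subst hc'; exact Or.inl ⟨y', hd', hw⟩
    · subst hc; subst hy; subst hc'; exact Or.inr ⟨y', hd', hw⟩
  · rintro (⟨y', hd', rfl⟩ | ⟨y', hd', rfl⟩)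
    · refine ⟨a, a', b, y', hd', ?_⟩
      ext z; simp only [Finset.mem_insert, Finset.mem_singleton]; tauto
    · refine ⟨a', a, b, y', hd', ?_⟩
      ext z; simp only [Finset.mem_insert, Finset.mem_singleton]; tauto

lemma isFace_vert (T : TriProd G H) {a : VG} {b b' : VH} (hHb : H.Adj b b') {w : VG × VH} :
    T.IsFace (a,b) (a,b') w ↔
      ((∃ x', T.diag (a,b) (x',b') ∧ w = (x',b')) ∨ (∃ x', T.diag (a,b') (x',b) ∧ w = (x',b))) := by
  constructor
  · rintro ⟨c, c', y, y', hd', heq⟩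
    rcases triple_vert hHb.ne ((T.diag_adj _ _ _ _ hd').1.ne)
      ((T.diag_adj _ _ _ _ hd').2.ne) heq with ⟨hc',hy,hy',hw⟩|⟨hc',hy,hy',hw⟩
    · subst hc'; subst hy; subst hy'
      exact Or.inr ⟨c, T.diag_symm _ _ hd', hw⟩
    · subst hc'; subst hy; subst hy'
      exact Or.inl ⟨c, T.diag_symm _ _ hd', hw⟩
  · rintro (⟨x', hd', rfl⟩ | ⟨x', hd', rfl⟩)
    · refine ⟨x', a, b', b, T.diag_symm _ _ hd', ?_⟩
      ext z; simp only [Finset.mem_insert, Finset.mem_singleton]; tauto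
    · refine ⟨x', a, b, b', T.diag_symm _ _ hd', ?_⟩
      ext z; simp only [Finset.mem_insert, Finset.mem_singleton]; tauto

-- avoiding characterizations
lemma isFaceAvoiding_horiz_left (T : TriProd G H) {a a' : VG} {b : VH} (hGa : G.Adj a a')
    {w : VG × VH} :
    T.IsFaceAvoiding (a,b) (a',b) w (a,b) ↔ ∃ y', T.diag (a',b) (a,y') ∧ w = (a,y') := by
  constructor
  · rintro ⟨c, c', y, y', hd', heq, hx1, hx2⟩
    rcases triple_horiz hGa.ne ((T.diag_adj _ _ _ _ hd').1.ne)
      ((T.diag_adj _ _ _ _ hd').2.ne) heq with ⟨hc,hy,hc',hw⟩|⟨hc,hy,hc',hw⟩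
    · exact absurd (by rw [hc, hy]) hx1
    · subst hc; subst hy; subst hc'; exact ⟨y', hd', hw⟩
  · rintro ⟨y', hd', rfl⟩
    have hy' : b ≠ y' := (T.diag_adj _ _ _ _ hd').2.ne
    refine ⟨a', a, b, y', hd', ?_, ?_, ?_⟩
    · ext z; simp only [Finset.mem_insert, Finset.mem_singleton]; tauto
    · exact fun h => hGa.ne (congrArg Prod.fst h)
    · exact fun h => hy' (congrArg Prod.snd h)

lemma isFaceAvoiding_horiz_right (T : TriProd G H) {a a' : VG} {b : VH} (hGa : G.Adj a a')
    {w : VG × VH} :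
    T.IsFaceAvoiding (a,b) (a',b) w (a',b) ↔ ∃ y', T.diag (a,b) (a',y') ∧ w = (a',y') := by
  constructor
  · rintro ⟨c, c', y, y', hd', heq, hx1, hx2⟩
    rcases triple_horiz hGa.ne ((T.diag_adj _ _ _ _ hd').1.ne)
      ((T.diag_adj _ _ _ _ hd').2.ne) heq with ⟨hc,hy,hc',hw⟩|⟨hc,hy,hc',hw⟩
    · subst hc; subst hy; subst hc'; exact ⟨y', hd', hw⟩
    · exact absurd (by rw [hc, hy]) hx1
  · rintro ⟨y', hd', rfl⟩
    have hy' : b ≠ y' := (T.diag_adj _ _ _ _ hd').2.ne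
    refine ⟨a, a', b, y', hd', ?_, ?_, ?_⟩
    · ext z; simp only [Finset.mem_insert, Finset.mem_singleton]; tauto
    · exact fun h => hGa.ne.symm (congrArg Prod.fst h)
    · exact fun h => hy' (congrArg Prod.snd h)

lemma isFaceAvoiding_vert_left (T : TriProd G H) {a : VG} {b b' : VH} (hHb : H.Adj b b')
    {w : VG × VH} :
    T.IsFaceAvoiding (a,b) (a,b') w (a,b) ↔ ∃ x', T.diag (a,b') (x',b) ∧ w = (x',b) := by
  constructor
  · rintro ⟨c, c', y, y', hd', heq, hx1, hx2⟩
    rcases triple_vert hHb.ne ((T.diag_adj _ _ _ _ hd').1.ne)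
      ((T.diag_adj _ _ _ _ hd').2.ne) heq with ⟨hc',hy,hy',hw⟩|⟨hc',hy,hy',hw⟩
    · subst hc'; subst hy; subst hy'; exact ⟨c, T.diag_symm _ _ hd', hw⟩
    · exact absurd (by rw [hc', hy']) hx2
  · rintro ⟨x', hd', rfl⟩
    have hx' : x' ≠ a := ((T.diag_adj _ _ _ _ hd').1.ne).symm
    refine ⟨x', a, b, b', T.diag_symm _ _ hd', ?_, ?_, ?_⟩
    · ext z; simp only [Finset.mem_insert, Finset.mem_singleton]; tauto
    · exact fun h => hx' (congrArg Prod.fst h).symm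
    · exact fun h => hHb.ne (congrArg Prod.snd h)

lemma isFaceAvoiding_vert_right (T : TriProd G H) {a : VG} {b b' : VH} (hHb : H.Adj b b')
    {w : VG × VH} :
    T.IsFaceAvoiding (a,b) (a,b') w (a,b') ↔ ∃ x', T.diag (a,b) (x',b') ∧ w = (x',b') := by
  constructor
  · rintro ⟨c, c', y, y', hd', heq, hx1, hx2⟩
    rcases triple_vert hHb.ne ((T.diag_adj _ _ _ _ hd').1.ne)
      ((T.diag_adj _ _ _ _ hd').2.ne) heq with ⟨hc',hy,hy',hw⟩|⟨hc',hy,hy',hw⟩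
    · exact absurd (by rw [hc', hy']) hx2
    · subst hc'; subst hy; subst hy'; exact ⟨c, T.diag_symm _ _ hd', hw⟩
  · rintro ⟨x', hd', rfl⟩
    have hx' : x' ≠ a := ((T.diag_adj _ _ _ _ hd').1.ne).symm
    refine ⟨x', a, b', b, T.diag_symm _ _ hd', ?_, ?_, ?_⟩
    · ext z; simp only [Finset.mem_insert, Finset.mem_singleton]; tauto
    · exact fun h => hx' (congrArg Prod.fst h).symm
    · exact fun h => hHb.ne.symm (congrArg Prod.snd h)


section WithFin

variable [Fintype VG] [Fintype VH]

lemma alpha_horiz_left (T : TriProd G H) {a a' : VG} {b : VH} (hGa : G.Adj a a') :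
    T.alpha (a,b) (a',b) (a,b) = ((univ.filter (fun y' => T.diag (a',b) (a,y'))).card : ℤ) := by
  have hnd : ¬ T.diag (a,b) (a',b) := fun h => ((T.diag_adj _ _ _ _ h).2).ne rfl
  have hset : univ.filter (fun w => T.IsFaceAvoiding (a,b) (a',b) w (a,b))
      = (univ.filter (fun y' => T.diag (a',b) (a,y'))).image (fun y' => ((a,y') : VG × VH)) := by
    ext w
    simp only [mem_filter, mem_univ, true_and, mem_image, isFaceAvoiding_horiz_left T hGa]
    constructor
    · rintro ⟨y', h, rfl⟩; exact ⟨y', h, rfl⟩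
    · rintro ⟨y', h, rfl⟩; exact ⟨y', h, rfl⟩
  simp only [TriProd.alpha]
  rw [if_pos (Or.inl trivial), if_neg hnd, hset,
    Finset.card_image_of_injective _ (fun y1 y2 h => by simpa using h)]

lemma alpha_horiz_right (T : TriProd G H) {a a' : VG} {b : VH} (hGa : G.Adj a a') :
    T.alpha (a,b) (a',b) (a',b) = ((univ.filter (fun y' => T.diag (a,b) (a',y'))).card : ℤ) := by
  have hnd : ¬ T.diag (a,b) (a',b) := fun h => ((T.diag_adj _ _ _ _ h).2).ne rfl
  have hset : univ.filter (fun w => T.IsFaceAvoiding (a,b) (a',b) w (a',b))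
      = (univ.filter (fun y' => T.diag (a,b) (a',y'))).image (fun y' => ((a',y') : VG × VH)) := by
    ext w
    simp only [mem_filter, mem_univ, true_and, mem_image, isFaceAvoiding_horiz_right T hGa]
    constructor
    · rintro ⟨y', h, rfl⟩; exact ⟨y', h, rfl⟩
    · rintro ⟨y', h, rfl⟩; exact ⟨y', h, rfl⟩
  simp only [TriProd.alpha]
  rw [if_pos (Or.inr trivial), if_neg hnd, hset,
    Finset.card_image_of_injective _ (fun y1 y2 h => by simpa using h)]

lemma alpha_vert_left (T : TriProd G H) {a : VG} {b b' : VH} (hHb : H.Adj b b') :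
    T.alpha (a,b) (a,b') (a,b) = ((univ.filter (fun x' => T.diag (a,b') (x',b))).card : ℤ) := by
  have hnd : ¬ T.diag (a,b) (a,b') := fun h => ((T.diag_adj _ _ _ _ h).1).ne rfl
  have hset : univ.filter (fun w => T.IsFaceAvoiding (a,b) (a,b') w (a,b))
      = (univ.filter (fun x' => T.diag (a,b') (x',b))).image (fun x' => ((x',b) : VG × VH)) := by
    ext w
    simp only [mem_filter, mem_univ, true_and, mem_image, isFaceAvoiding_vert_left T hHb]
    constructor
    · rintro ⟨x', h, rfl⟩; exact ⟨x', h, rfl⟩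
    · rintro ⟨x', h, rfl⟩; exact ⟨x', h, rfl⟩
  simp only [TriProd.alpha]
  rw [if_pos (Or.inl trivial), if_neg hnd, hset,
    Finset.card_image_of_injective _ (fun y1 y2 h => by simpa using h)]

lemma alpha_vert_right (T : TriProd G H) {a : VG} {b b' : VH} (hHb : H.Adj b b') :
    T.alpha (a,b) (a,b') (a,b') = ((univ.filter (fun x' => T.diag (a,b) (x',b'))).card : ℤ) := by
  have hnd : ¬ T.diag (a,b) (a,b') := fun h => ((T.diag_adj _ _ _ _ h).1).ne rfl
  have hset : univ.filter (fun w => T.IsFaceAvoiding (a,b) (a,b') w (a,b'))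
      = (univ.filter (fun x' => T.diag (a,b) (x',b'))).image (fun x' => ((x',b') : VG × VH)) := by
    ext w
    simp only [mem_filter, mem_univ, true_and, mem_image, isFaceAvoiding_vert_right T hHb]
    constructor
    · rintro ⟨x', h, rfl⟩; exact ⟨x', h, rfl⟩
    · rintro ⟨x', h, rfl⟩; exact ⟨x', h, rfl⟩
  simp only [TriProd.alpha]
  rw [if_pos (Or.inr trivial), if_neg hnd, hset,
    Finset.card_image_of_injective _ (fun y1 y2 h => by simpa using h)]

lemma alpha_diag_val (T : TriProd G H) {u v x : VG × VH} (hd : T.diag u v) (hx : x = u ∨ x = v) :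
    T.alpha u v x = 1 := by
  simp only [TriProd.alpha, if_pos hx, if_pos hd]

-- symmetry lemmas
lemma isFace_comm (T : TriProd G H) {u v w : VG × VH} :
    T.IsFace u v w ↔ T.IsFace v u w := by
  constructor <;>
  · rintro ⟨c, c', y, y', hd, heq⟩
    exact ⟨c, c', y, y', hd, by rw [Finset.insert_comm]; exact heq⟩

lemma isFaceAvoiding_comm (T : TriProd G H) {u v w x : VG × VH} :
    T.IsFaceAvoiding u v w x ↔ T.IsFaceAvoiding v u w x := by
  constructor <;>
  · rintro ⟨c, c', y, y', hd, heq, h1, h2⟩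
    exact ⟨c, c', y, y', hd, by rw [Finset.insert_comm]; exact heq, h1, h2⟩

lemma alpha_comm (T : TriProd G H) (u v x : VG × VH) :
    T.alpha u v x = T.alpha v u x := by
  have h1 : (x = u ∨ x = v) = (x = v ∨ x = u) := propext or_comm
  have h2 : T.diag u v = T.diag v u := propext ⟨T.diag_symm _ _, T.diag_symm _ _⟩
  have h3 : (univ.filter (fun w => T.IsFaceAvoiding u v w x))
      = (univ.filter (fun w => T.IsFaceAvoiding v u w x)) := by
    ext w; simp only [mem_filter, mem_univ, true_and, isFaceAvoiding_comm T]
  simp only [TriProd.alpha, h1, h2, h3]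

lemma div_comm (T : TriProd G H) (φ : VG × VH → ℤ) (u v : VG × VH) :
    T.Div φ u v = T.Div φ v u := by
  have h3 : (univ.filter (fun w => T.IsFace u v w))
      = (univ.filter (fun w => T.IsFace v u w)) := by
    ext w; simp only [mem_filter, mem_univ, true_and, isFace_comm T]
  simp only [TriProd.Div, h3]
  rw [alpha_comm T u v u, alpha_comm T u v v]
  ring

lemma adj_comm (T : TriProd G H) {u v : VG × VH} (h : T.Adj u v) : T.Adj v u := by
  rcases h with ⟨h1, h2⟩ | ⟨h1, h2⟩ | h
  · exact Or.inl ⟨h1.symm, h2.symm⟩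
  · exact Or.inr (Or.inl ⟨h1.symm, h2.symm⟩)
  · exact Or.inr (Or.inr (T.diag_symm _ _ h))

end WithFin

lemma exists_nbr {G : SimpleGraph VG} (hG : G.Connected) (hGe : ∃ x y, G.Adj x y) (a : VG) :
    ∃ x, G.Adj a x := by
  obtain ⟨a1, a2, h12⟩ := hGe
  obtain ⟨p⟩ := hG.preconnected a a1
  cases p with
  | nil => exact ⟨a2, h12⟩
  | cons h _ => exact ⟨_, h⟩


end MyAux


/-- Every divisor on a triangulated product of `G` and `H`
satisfying the balancing conditions is ℚ-Cartier. -/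
theorem balancing_implies_qcartier {VG VH : Type*} [Fintype VG] [Fintype VH]
    (G : SimpleGraph VG) (H : SimpleGraph VH)
    (hG : G.Connected) (hH : H.Connected)
    (hGe : ∃ a a', G.Adj a a') (hHe : ∃ b b', H.Adj b b')
    (T : TriProd G H)
    (D : VG × VH → VG × VH → ℤ) (hsymm : ∀ u v, D u v = D v u)
    (hD : T.Balanced D) :
    T.QCartier D := by
  classical
  set m : ℤ := (((Fintype.card VG).factorial * (Fintype.card VH).factorial : ℕ) : ℤ) with hm
  have hmpos : (0:ℤ) < m := by
    rw [hm]; exact_mod_cast Nat.mul_pos (Nat.factorial_pos _) (Nat.factorial_pos _)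
  refine ⟨m, hmpos.ne', ?_⟩
  rintro ⟨a, b⟩
  obtain ⟨a₀, ha₀⟩ := exists_nbr hG hGe a
  obtain ⟨b₀, hb₀⟩ := exists_nbr hH hHe b
  set s : ℤ := ∑ c ∈ univ.filter (fun c : VH => T.Adj (a, b) (a₀, c)), D (a, b) (a₀, c) with hs_def
  set t : ℤ := ∑ c ∈ univ.filter (fun c : VG => T.Adj (a, b) (c, b₀)), D (a, b) (c, b₀) with ht_def
  set dG : ℕ := (univ.filter (fun x => G.Adj a x)).card with hdG
  set eH : ℕ := (univ.filter (fun y => H.Adj b y)).card with heH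
  have hdpos : 0 < dG := Finset.card_pos.mpr ⟨a₀, mem_filter.mpr ⟨mem_univ _, ha₀⟩⟩
  have hepos : 0 < eH := Finset.card_pos.mpr ⟨b₀, mem_filter.mpr ⟨mem_univ _, hb₀⟩⟩
  have hdGdvd : (dG : ℤ) ∣ m := by
    rw [hm]
    exact_mod_cast (Nat.dvd_factorial hdpos
      (le_trans (Finset.card_filter_le _ _) (le_of_eq Finset.card_univ))).mul_right _
  have heHdvd : (eH : ℤ) ∣ m := by
    rw [hm]
    exact_mod_cast (Nat.dvd_factorial hepos
      (le_trans (Finset.card_filter_le _ _) (le_of_eq Finset.card_univ))).mul_left _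
  set uval : ℤ := (m / dG) * t with huval
  set vval : ℤ := (m / eH) * s with hvval
  have hu_eq : (dG : ℤ) * uval = m * t := by rw [huval, ← mul_assoc, Int.mul_ediv_cancel' hdGdvd]
  have hv_eq : (eH : ℤ) * vval = m * s := by rw [hvval, ← mul_assoc, Int.mul_ediv_cancel' heHdvd]
  set φ : VG × VH → ℤ := fun u =>
    if u = (a,b) then 0
    else if u.1 = a ∧ H.Adj b u.2 then vval
    else if u.2 = b ∧ G.Adj a u.1 then uval
    else if T.diag (a,b) u then uval + vval - m * D (a,b) u
    else 0 with hφ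
  have hφ0 : φ (a,b) = 0 := by rw [hφ]; simp
  have hφV : ∀ y', H.Adj b y' → φ (a,y') = vval := by
    intro y' h
    rw [hφ]; dsimp only
    rw [if_neg (fun hh => h.ne (congrArg Prod.snd hh).symm), if_pos ⟨rfl, h⟩]
  have hφH : ∀ x', G.Adj a x' → φ (x',b) = uval := by
    intro x' h
    rw [hφ]; dsimp only
    rw [if_neg (fun hh => h.ne (congrArg Prod.fst hh).symm),
        if_neg (fun hh => h.ne hh.1.symm), if_pos ⟨rfl, h⟩]
  have hφD : ∀ v, T.diag (a,b) v → φ v = uval + vval - m * D (a,b) v := by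
    rintro ⟨x', y'⟩ hv
    obtain ⟨hg2, hh2⟩ := T.diag_adj _ _ _ _ hv
    have n1 : ¬((x',y') = ((a,b) : VG × VH)) := fun hh => hg2.ne (congrArg Prod.fst hh).symm
    have n2 : ¬(((x',y') : VG × VH).1 = a ∧ H.Adj b ((x',y') : VG × VH).2) :=
      fun hh => hg2.ne hh.1.symm
    have n3 : ¬(((x',y') : VG × VH).2 = b ∧ G.Adj a ((x',y') : VG × VH).1) :=
      fun hh => hh2.ne hh.1.symm
    rw [hφ]; dsimp only
    rw [if_neg n1, if_neg n2, if_neg n3, if_pos hv]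
  have main : ∀ v, T.Adj (a,b) v → m * D (a,b) v = T.Div φ (a,b) v := by
    rintro ⟨a1, b1⟩ hAdj
    rcases hAdj with ⟨h2, hGadj⟩ | ⟨h1, hHadj⟩ | hdg
    · -- horizontal edge
      have h2' : b = b1 := h2
      subst h2'
      have hGadj' : G.Adj a a1 := hGadj
      set A2 : Finset VH := univ.filter (fun y' => T.diag (a,b) (a1,y')) with hA2
      set A1 : Finset VH := univ.filter (fun y' => T.diag (a1,b) (a,y')) with hA1
      have hmemA2 : ∀ y' ∈ A2, T.diag (a,b) (a1,y') := fun y' hy => (mem_filter.mp hy).2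
      have hmemA1 : ∀ y' ∈ A1, T.diag (a1,b) (a,y') := fun y' hy => (mem_filter.mp hy).2
      have hfaces : univ.filter (fun w => T.IsFace (a,b) (a1,b) w)
          = A2.image (fun y' => ((a1,y') : VG × VH)) ∪ A1.image (fun y' => ((a,y') : VG × VH)) := by
        ext w
        simp only [hA2, hA1, mem_filter, mem_univ, true_and, mem_union, mem_image,
          isFace_horiz T hGadj']
        constructor
        · rintro (⟨y', h, rfl⟩ | ⟨y', h, rfl⟩)
          · exact Or.inl ⟨y', h, rfl⟩
          · exact Or.inr ⟨y', h, rfl⟩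
        · rintro (⟨y', h, rfl⟩ | ⟨y', h, rfl⟩)
          · exact Or.inl ⟨y', h, rfl⟩
          · exact Or.inr ⟨y', h, rfl⟩
      have hdisj : Disjoint (A2.image (fun y' => ((a1,y') : VG × VH)))
          (A1.image (fun y' => ((a,y') : VG × VH))) := by
        rw [Finset.disjoint_left]
        rintro w hw1 hw2
        simp only [mem_image] at hw1 hw2
        obtain ⟨y1, _, rfl⟩ := hw1
        obtain ⟨y2, _, h⟩ := hw2
        exact hGadj'.ne (congrArg Prod.fst h)
      have hsumfaces : (∑ w ∈ univ.filter (fun w => T.IsFace (a,b) (a1,b) w), φ w)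
          = (∑ y' ∈ A2, φ (a1,y')) + (∑ y' ∈ A1, φ (a,y')) := by
        rw [hfaces, Finset.sum_union hdisj,
          Finset.sum_image (fun x _ y _ h => by simpa using h),
          Finset.sum_image (fun x _ y _ h => by simpa using h)]
      have hS2 : (∑ y' ∈ A2, φ (a1,y'))
          = A2.card * (uval + vval) - m * ∑ y' ∈ A2, D (a,b) (a1,y') := by
        rw [Finset.sum_congr rfl (fun y' hy => hφD (a1,y') (hmemA2 y' hy)),
          Finset.sum_sub_distrib, Finset.sum_const, nsmul_eq_mul, ← Finset.mul_sum]
      have hS1 : (∑ y' ∈ A1, φ (a,y')) = A1.card * vval := by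
        rw [Finset.sum_congr rfl
            (fun y' hy => hφV y' ((T.diag_adj _ _ _ _ (hmemA1 y' hy)).2)),
          Finset.sum_const, nsmul_eq_mul]
      have hα1 := alpha_horiz_left T (b := b) hGadj'
      have hα2 := alpha_horiz_right T (b := b) hGadj'
      have hunion : A1 ∪ A2 = univ.filter (fun y' => H.Adj b y') := by
        ext y'
        simp only [hA1, hA2, mem_union, mem_filter, mem_univ, true_and]
        constructor
        · rintro (h | h)
          · exact (T.diag_adj _ _ _ _ h).2
          · exact (T.diag_adj _ _ _ _ h).2
        · intro h
          rcases T.diag_choice a a1 b y' hGadj' h with ⟨h1, _⟩ | ⟨_, h2⟩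
          · exact Or.inr h1
          · exact Or.inl (T.diag_symm _ _ h2)
      have hdisj12 : Disjoint A1 A2 := by
        rw [Finset.disjoint_left]
        intro y' hy1 hy2
        have h1 := hmemA1 y' hy1
        have h2 := hmemA2 y' hy2
        rcases T.diag_choice a a1 b y' hGadj' ((T.diag_adj _ _ _ _ h2).2) with ⟨_, hn⟩ | ⟨hn, _⟩
        · exact hn (T.diag_symm _ _ h1)
        · exact hn h2
      have hcard : (A1.card : ℤ) + A2.card = eH := by
        rw [heH, ← hunion, Finset.card_union_of_disjoint hdisj12]
        push_cast; ring
      have hsb : s = D (a,b) (a1,b) + ∑ y' ∈ A2, D (a,b) (a1,y') := by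
        have hbal := (hD a b).1 a1 a₀ hGadj' ha₀
        have hfil : univ.filter (fun c : VH => T.Adj (a,b) (a1,c)) = insert b A2 := by
          ext c
          simp only [hA2, mem_insert, mem_filter, mem_univ, true_and]
          simp only [TriProd.Adj]
          constructor
          · rintro (⟨hcb, _⟩ | ⟨haa, _⟩ | h)
            · exact Or.inl hcb.symm
            · exact absurd haa hGadj'.ne
            · exact Or.inr h
          · rintro (rfl | h)
            · exact Or.inl ⟨rfl, hGadj'⟩
            · exact Or.inr (Or.inr h)
        have hbni : b ∉ A2 := by
          simp only [hA2, mem_filter, mem_univ, true_and]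
          exact fun h => ((T.diag_adj _ _ _ _ h).2).ne rfl
        rw [hs_def, ← hbal, hfil, Finset.sum_insert hbni]
      rw [TriProd.Div, hα1, hα2, ← hA1, ← hA2, hsumfaces, hS2, hS1, hφ0, hφH a1 hGadj']
      linear_combination (-m) * hsb - hv_eq - vval * hcard
    · -- vertical edge
      have h1' : a = a1 := h1
      subst h1'
      have hHadj' : H.Adj b b1 := hHadj
      set B2 : Finset VG := univ.filter (fun x' => T.diag (a,b) (x',b1)) with hB2
      set B1 : Finset VG := univ.filter (fun x' => T.diag (a,b1) (x',b)) with hB1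
      have hmemB2 : ∀ x' ∈ B2, T.diag (a,b) (x',b1) := fun x' hx => (mem_filter.mp hx).2
      have hmemB1 : ∀ x' ∈ B1, T.diag (a,b1) (x',b) := fun x' hx => (mem_filter.mp hx).2
      have hfaces : univ.filter (fun w => T.IsFace (a,b) (a,b1) w)
          = B2.image (fun x' => ((x',b1) : VG × VH)) ∪ B1.image (fun x' => ((x',b) : VG × VH)) := by
        ext w
        simp only [hB2, hB1, mem_filter, mem_univ, true_and, mem_union, mem_image,
          isFace_vert T hHadj']
        constructor
        · rintro (⟨x', h, rfl⟩ | ⟨x', h, rfl⟩)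
          · exact Or.inl ⟨x', h, rfl⟩
          · exact Or.inr ⟨x', h, rfl⟩
        · rintro (⟨x', h, rfl⟩ | ⟨x', h, rfl⟩)
          · exact Or.inl ⟨x', h, rfl⟩
          · exact Or.inr ⟨x', h, rfl⟩
      have hdisj : Disjoint (B2.image (fun x' => ((x',b1) : VG × VH)))
          (B1.image (fun x' => ((x',b) : VG × VH))) := by
        rw [Finset.disjoint_left]
        rintro w hw1 hw2
        simp only [mem_image] at hw1 hw2
        obtain ⟨x1, _, rfl⟩ := hw1
        obtain ⟨x2, _, h⟩ := hw2
        exact hHadj'.ne (congrArg Prod.snd h)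
      have hsumfaces : (∑ w ∈ univ.filter (fun w => T.IsFace (a,b) (a,b1) w), φ w)
          = (∑ x' ∈ B2, φ (x',b1)) + (∑ x' ∈ B1, φ (x',b)) := by
        rw [hfaces, Finset.sum_union hdisj,
          Finset.sum_image (fun x _ y _ h => by simpa using h),
          Finset.sum_image (fun x _ y _ h => by simpa using h)]
      have hS2 : (∑ x' ∈ B2, φ (x',b1))
          = B2.card * (uval + vval) - m * ∑ x' ∈ B2, D (a,b) (x',b1) := by
        rw [Finset.sum_congr rfl (fun x' hx => hφD (x',b1) (hmemB2 x' hx)),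
          Finset.sum_sub_distrib, Finset.sum_const, nsmul_eq_mul, ← Finset.mul_sum]
      have hS1 : (∑ x' ∈ B1, φ (x',b)) = B1.card * uval := by
        rw [Finset.sum_congr rfl
            (fun x' hx => hφH x' ((T.diag_adj _ _ _ _ (hmemB1 x' hx)).1)),
          Finset.sum_const, nsmul_eq_mul]
      have hα1 := alpha_vert_left T (a := a) hHadj'
      have hα2 := alpha_vert_right T (a := a) hHadj'
      have hunion : B1 ∪ B2 = univ.filter (fun x' => G.Adj a x') := by
        ext x'
        simp only [hB1, hB2, mem_union, mem_filter, mem_univ, true_and]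
        constructor
        · rintro (h | h)
          · exact (T.diag_adj _ _ _ _ h).1
          · exact (T.diag_adj _ _ _ _ h).1
        · intro h
          rcases T.diag_choice a x' b b1 h hHadj' with ⟨h1, _⟩ | ⟨_, h2⟩
          · exact Or.inr h1
          · exact Or.inl h2
      have hdisj12 : Disjoint B1 B2 := by
        rw [Finset.disjoint_left]
        intro x' hx1 hx2
        have h1 := hmemB1 x' hx1
        have h2 := hmemB2 x' hx2
        rcases T.diag_choice a x' b b1 ((T.diag_adj _ _ _ _ h2).1) hHadj' with ⟨_, hn⟩ | ⟨hn, _⟩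
        · exact hn h1
        · exact hn h2
      have hcard : (B1.card : ℤ) + B2.card = dG := by
        rw [hdG, ← hunion, Finset.card_union_of_disjoint hdisj12]
        push_cast; ring
      have hsb : t = D (a,b) (a,b1) + ∑ x' ∈ B2, D (a,b) (x',b1) := by
        have hbal := (hD a b).2 b1 b₀ hHadj' hb₀
        have hfil : univ.filter (fun c : VG => T.Adj (a,b) (c,b1)) = insert a B2 := by
          ext c
          simp only [hB2, mem_insert, mem_filter, mem_univ, true_and]
          simp only [TriProd.Adj]
          constructor
          · rintro (⟨hbb, _⟩ | ⟨hac, _⟩ | h)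
            · exact absurd hbb hHadj'.ne
            · exact Or.inl hac.symm
            · exact Or.inr h
          · rintro (rfl | h)
            · exact Or.inr (Or.inl ⟨rfl, hHadj'⟩)
            · exact Or.inr (Or.inr h)
        have hani : a ∉ B2 := by
          simp only [hB2, mem_filter, mem_univ, true_and]
          exact fun h => ((T.diag_adj _ _ _ _ h).1).ne rfl
        rw [ht_def, ← hbal, hfil, Finset.sum_insert hani]
      rw [TriProd.Div, hα1, hα2, ← hB1, ← hB2, hsumfaces, hS2, hS1, hφ0, hφV b1 hHadj']
      linear_combination (-m) * hsb - hu_eq - uval * hcard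
    · -- diagonal edge
      have hg := (T.diag_adj _ _ _ _ hdg).1
      have hh := (T.diag_adj _ _ _ _ hdg).2
      have hface : univ.filter (fun w => T.IsFace (a,b) (a1,b1) w)
          = ({(a1,b),(a,b1)} : Finset (VG × VH)) := by
        ext w
        simp only [mem_filter, mem_univ, true_and, isFace_diag T hdg, mem_insert, mem_singleton]
      have hne : ((a1,b) : VG × VH) ≠ (a,b1) := fun h => hg.ne.symm (congrArg Prod.fst h)
      rw [TriProd.Div, hface, Finset.sum_pair hne, alpha_diag_val T hdg (Or.inl rfl),
        alpha_diag_val T hdg (Or.inr rfl), hφ0, hφH a1 hg, hφV b1 hh, hφD (a1,b1) hdg]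
      ring
  refine ⟨φ, ?_⟩
  intro u v hAdj hx
  rcases hx with rfl | rfl
  · exact main v hAdj
  · have h0 := main u (adj_comm T hAdj)
    dsimp only
    rw [hsymm u (a,b), div_comm T φ u (a,b)]
    exact h0
end
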